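/- arXiv:1408.5034 — 4 statements merged into one kernel-verified Lean document; each statement's English description precedes it below -/
import Mathlib

section
/- Let G be a finite group that factorizes as G = A*B, where A and B are subgroups of coprime orders such that every prime dividing the order of A is smaller than every prime dividing the order of B. If the intersection of the lower central series of G (the nilpotent residual γ_∞(G)) is cyclic, then B is normal in G. -/
open scoped Pointwise

lemma aux_orderOf_component {ι : Type*} {M : ι → Type*} [∀ i, Monoid (M i)]
    (f : ∀ i, M i) (i : ι) : orderOf (f i) ∣ orderOf f :=
  orderOf_dvd_of_pow_eq_one (by rw [← Pi.pow_apply, pow_orderOf_eq_one, Pi.one_apply])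

lemma aux_pi_coprime {ι : Type*} [Finite ι] {M : ι → Type*} [∀ i, Group (M i)]
    [∀ i, Finite (M i)] (a : ℕ) (f : ∀ i, M i)
    (h : ∀ i, Nat.Coprime (orderOf (f i)) a) : Nat.Coprime (orderOf f) a := by
  have := Fintype.ofFinite ι
  have hdvd : orderOf f ∣ ∏ i, orderOf (f i) := by
    apply orderOf_dvd_of_pow_eq_one
    funext i
    rw [Pi.pow_apply, Pi.one_apply]
    exact orderOf_dvd_iff_pow_eq_one.mp (Finset.dvd_prod_of_mem _ (Finset.mem_univ i))
  exact Nat.Coprime.coprime_dvd_left hdvd (Nat.Coprime.prod_left fun i _ => h i)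

lemma aux_nilpotent_coprime_mul {H : Type*} [Group H] [Finite H] [Group.IsNilpotent H]
    (a : ℕ) {x y : H} (hx : Nat.Coprime (orderOf x) a) (hy : Nat.Coprime (orderOf y) a) :
    Nat.Coprime (orderOf (x * y)) a := by
  obtain ⟨e⟩ : Nonempty ((∀ p : (Nat.card H).primeFactors, ∀ P : Sylow p H, (↑P : Subgroup H)) ≃* H) :=
    ((isNilpotent_of_finite_tfae (G := H)).out 0 4).mp ‹_›
  set f := e.symm x with hf
  set g := e.symm y with hg
  have hfg : e.symm (x * y) = f * g := map_mul _ _ _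
  have horder : ∀ z : H, orderOf (e.symm z) = orderOf z := fun z =>
    orderOf_injective e.symm.toMonoidHom e.symm.injective z
  rw [← horder, hfg]
  have hof : Nat.Coprime (orderOf f) a := by rw [horder]; exact hx
  have hog : Nat.Coprime (orderOf g) a := by rw [horder]; exact hy
  apply aux_pi_coprime
  intro p
  apply aux_pi_coprime
  intro P
  have hp : (p : ℕ).Prime := Nat.prime_of_mem_primeFactors p.2
  haveI : Fact (p : ℕ).Prime := ⟨hp⟩
  have hPord : ∀ z : (↑P : Subgroup H), ∃ k : ℕ, orderOf z = (p : ℕ) ^ k := by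
    intro z
    obtain ⟨k, hk⟩ := P.isPGroup' z
    obtain ⟨j, _, hj⟩ := (Nat.dvd_prime_pow hp).mp (orderOf_dvd_of_pow_eq_one hk)
    exact ⟨j, hj⟩
  by_cases hpa : (p : ℕ) ∣ a
  · have h1 : ∀ (z : ∀ p : (Nat.card H).primeFactors, ∀ P : Sylow p H, (↑P : Subgroup H)),
        Nat.Coprime (orderOf z) a → z p P = 1 := by
      intro z hz
      obtain ⟨k, hk⟩ := hPord (z p P)
      have : orderOf (z p P) ∣ orderOf z :=
        dvd_trans (aux_orderOf_component (z p) P) (aux_orderOf_component z p)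
      have hcop : Nat.Coprime ((p : ℕ) ^ k) a := hk ▸ Nat.Coprime.coprime_dvd_left this hz
      rcases Nat.eq_zero_or_pos k with h0 | h0
      · rw [← orderOf_eq_one_iff, hk, h0, pow_zero]
      · exact absurd hpa ((Nat.Prime.coprime_iff_not_dvd hp).mp
          (hcop.coprime_dvd_left (dvd_pow_self _ h0.ne')))
    have : (f * g) p P = 1 := by
      have := h1 f hof
      have := h1 g hog
      simp_all [Pi.mul_apply]
    rw [this, orderOf_one]
    exact Nat.coprime_one_left a
  · obtain ⟨k, hk⟩ := hPord ((f * g) p P)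
    rw [hk]
    exact Nat.Coprime.pow_left _ (hp.coprime_iff_not_dvd.mpr hpa)

instance aux_iInf_lcs_normal {G : Type*} [Group G] : (⨅ n : ℕ, (⊤ : Subgroup G).lowerCentralSeries n).Normal :=
  ⟨fun x hx g => Subgroup.mem_iInf.2 fun n =>
    (Subgroup.lowerCentralSeries_normal ⊤ n).conj_mem x (Subgroup.mem_iInf.1 hx n) g⟩

lemma aux_lcs_succ' {G : Type*} [Group G] (n : ℕ) :
    (⊤ : Subgroup G).lowerCentralSeries (n + 1) = ⁅(⊤ : Subgroup G).lowerCentralSeries n, (⊤ : Subgroup G)⁆ := rfl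

lemma aux_map_lcs {G H : Type*} [Group G] [Group H] (f : G →* H)
    (hf : Function.Surjective f) (n : ℕ) :
    ((⊤ : Subgroup G).lowerCentralSeries n).map f = (⊤ : Subgroup H).lowerCentralSeries n := by
  induction n with
  | zero =>
    rw [Subgroup.lowerCentralSeries_zero, Subgroup.lowerCentralSeries_zero]
    exact Subgroup.map_top_of_surjective f hf
  | succ n ih =>
    rw [aux_lcs_succ', aux_lcs_succ', Subgroup.map_commutator, ih,
      Subgroup.map_top_of_surjective f hf]

lemma aux_exists_eq {G : Type*} [Group G] [Finite G] :
    ∃ k, (⊤ : Subgroup G).lowerCentralSeries k = ⨅ n : ℕ, (⊤ : Subgroup G).lowerCentralSeries n := by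
  have hne : (Set.range fun n => Nat.card ((⊤ : Subgroup G).lowerCentralSeries n)).Nonempty := ⟨_, ⟨0, rfl⟩⟩
  obtain ⟨k, hk⟩ := Nat.sInf_mem hne
  set m := sInf (Set.range fun n => Nat.card ((⊤ : Subgroup G).lowerCentralSeries n)) with hm
  have hmin : ∀ n, m ≤ Nat.card ((⊤ : Subgroup G).lowerCentralSeries n) := fun n => Nat.sInf_le ⟨n, rfl⟩
  have hstep : ∀ j, (⊤ : Subgroup G).lowerCentralSeries (k + j) = (⊤ : Subgroup G).lowerCentralSeries k := by
    intro j
    induction j with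
    | zero => rfl
    | succ j ih =>
      have hle : (⊤ : Subgroup G).lowerCentralSeries (k + (j + 1)) ≤ (⊤ : Subgroup G).lowerCentralSeries k :=
        le_trans ((⊤ : Subgroup G).lowerCentralSeries_antitone (Nat.le_succ (k + j))) ih.le
      refine Subgroup.eq_of_le_of_card_ge hle ?_
      calc Nat.card ((⊤ : Subgroup G).lowerCentralSeries k) = m := hk
        _ ≤ Nat.card ((⊤ : Subgroup G).lowerCentralSeries (k + (j + 1))) := hmin _
  refine ⟨k, le_antisymm (le_iInf fun n => ?_) (iInf_le _ k)⟩
  rcases le_or_gt n k with h | h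
  · exact (⊤ : Subgroup G).lowerCentralSeries_antitone h
  · have h2 := hstep (n - k)
    rw [Nat.add_sub_cancel' h.le] at h2
    exact h2.ge

lemma aux_quot_nilpotent {G : Type*} [Group G] [Finite G] :
    Group.IsNilpotent (G ⧸ (⨅ n : ℕ, (⊤ : Subgroup G).lowerCentralSeries n)) := by
  obtain ⟨k, hk⟩ := aux_exists_eq (G := G)
  rw [Subgroup.nilpotent_iff_lowerCentralSeries]
  refine ⟨k, ?_⟩
  set N := ⨅ n : ℕ, (⊤ : Subgroup G).lowerCentralSeries n
  rw [← aux_map_lcs (QuotientGroup.mk' N) (QuotientGroup.mk'_surjective N) k, hk]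
  rw [Subgroup.map_eq_bot_iff, QuotientGroup.ker_mk']

lemma aux_orderOf_conj {G : Type*} [Group G] (g x : G) : orderOf (g * x * g⁻¹) = orderOf x := by
  have := orderOf_injective (MulAut.conj g).toMonoidHom (MulEquiv.injective _) x
  simpa [MulAut.conj_apply] using this

theorem stmt_3 {G : Type*} [Group G] [Finite G] (A B : Subgroup G)
    (hfact : ∀ g : G, ∃ a ∈ A, ∃ b ∈ B, g = a * b)
    (hcop : Nat.Coprime (Nat.card A) (Nat.card B))
    (hlt : ∀ p₁ p₂ : ℕ, p₁.Prime → p₂.Prime → p₁ ∣ Nat.card A → p₂ ∣ Nat.card B → p₁ < p₂)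
    (hcyc : IsCyclic (⨅ n : ℕ, (⊤ : Subgroup G).lowerCentralSeries n : Subgroup G)) :
    B.Normal := by
  set a := Nat.card A with ha
  set b := Nat.card B with hb
  have hGpos : 0 < Nat.card G := Nat.card_pos
  have hG : Nat.card G = a * b := by
    refine Nat.le_antisymm ?_ (Nat.le_of_dvd hGpos
      (Nat.Coprime.mul_dvd_of_dvd_of_dvd hcop (Subgroup.card_subgroup_dvd_card A)
        (Subgroup.card_subgroup_dvd_card B)))
    have hsurj : Function.Surjective (fun p : A × B => (p.1 : G) * p.2) := by
      intro g
      obtain ⟨x, hx, y, hy, rfl⟩ := hfact g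
      exact ⟨(⟨x, hx⟩, ⟨y, hy⟩), rfl⟩
    calc Nat.card G ≤ Nat.card (A × B) := Nat.card_le_card_of_surjective _ hsurj
      _ = a * b := Nat.card_prod _ _
  set N : Subgroup G := ⨅ n : ℕ, (⊤ : Subgroup G).lowerCentralSeries n with hNdef
  haveI hNcyc : IsCyclic N := hcyc
  -- N is commutative-in-G on its elements
  have hNab : ∀ x ∈ N, ∀ y ∈ N, x * y = y * x := by
    intro x hx y hy
    letI := IsCyclic.commGroup (α := N)
    have : (⟨x, hx⟩ : N) * ⟨y, hy⟩ = ⟨y, hy⟩ * ⟨x, hx⟩ := mul_comm _ _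
    exact congrArg Subtype.val this
  -- the π'-part of N
  set Q : Subgroup G :=
    { carrier := {x : G | x ∈ N ∧ Nat.Coprime (orderOf x) b}
      mul_mem' := by
        rintro x y ⟨hxN, hx⟩ ⟨hyN, hy⟩
        refine ⟨mul_mem hxN hyN, ?_⟩
        have hcomm : Commute x y := hNab x hxN y hyN
        have hdvd : orderOf (x * y) ∣ orderOf x * orderOf y :=
          dvd_trans hcomm.orderOf_mul_dvd_lcm
            (Nat.lcm_dvd (dvd_mul_right _ _) (dvd_mul_left _ _))
        exact Nat.Coprime.coprime_dvd_left hdvd (Nat.Coprime.mul hx hy)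
      one_mem' := ⟨one_mem N, by rw [orderOf_one]; exact Nat.coprime_one_left b⟩
      inv_mem' := by
        rintro x ⟨hxN, hx⟩
        exact ⟨inv_mem hxN, by rwa [orderOf_inv]⟩ } with hQdef
  have hQmem : ∀ x : G, x ∈ Q ↔ x ∈ N ∧ Nat.Coprime (orderOf x) b := fun x => Iff.rfl
  haveI hQnormal : Q.Normal := by
    constructor
    intro x hx g
    rw [hQmem] at hx ⊢
    exact ⟨(aux_iInf_lcs_normal).conj_mem x hx.1 g, by rw [aux_orderOf_conj]; exact hx.2⟩
  have hQN : Q ≤ N := fun x hx => ((hQmem x).mp hx).1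
  haveI hQcyc : IsCyclic Q := Subgroup.isCyclic_of_le hQN
  set n := Nat.card N with hn
  set q := Nat.card Q with hq
  have hqb : Nat.Coprime q b := by
    by_contra h
    obtain ⟨p, hp, hpq, hpb⟩ := Nat.Prime.not_coprime_iff_dvd.mp h
    haveI : Fact p.Prime := ⟨hp⟩
    obtain ⟨y, hy⟩ := exists_prime_orderOf_dvd_card' (G := Q) p hpq
    have hyQ : (y : G) ∈ Q := y.2
    have : Nat.Coprime (orderOf (y : G)) b := ((hQmem _).mp hyQ).2
    rw [Subgroup.orderOf_coe, hy] at this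
    exact (hp.coprime_iff_not_dvd.mp this) hpb
  have hqa : q ∣ a := by
    have h1 : q ∣ a * b := hG ▸ Subgroup.card_subgroup_dvd_card Q
    exact (Nat.Coprime.dvd_mul_right hqb).mp h1
  -- every element of order coprime to a centralizes Q
  have hcentral : ∀ x : G, Nat.Coprime (orderOf x) a → ∀ y ∈ Q, x * y * x⁻¹ = y := by
    intro x hx y hy
    have hxb : orderOf x ∣ b := by
      have h1 : orderOf x ∣ a * b := hG ▸ orderOf_dvd_natCard x
      exact (Nat.Coprime.dvd_mul_left hx).mp h1
    have hcoptot : Nat.Coprime (Nat.totient q) b := by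
      by_contra h
      obtain ⟨r, hr, hrt, hrb⟩ := Nat.Prime.not_coprime_iff_dvd.mp h
      have hq0 : q ≠ 0 := Nat.card_pos.ne'
      rw [Nat.totient_eq_prod_factorization hq0] at hrt
      obtain ⟨p, hpmem, hpdvd⟩ := hr.prime.exists_mem_finset_dvd hrt
      have hpmem' : p ∈ q.primeFactors := Nat.support_factorization q ▸ hpmem
      have hpprime : p.Prime := Nat.prime_of_mem_primeFactors hpmem'
      have hpq : p ∣ q := Nat.dvd_of_mem_primeFactors hpmem'
      have hpa : p ∣ a := dvd_trans hpq hqa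
      rcases (Nat.Prime.dvd_mul hr).mp hpdvd with hcase | hcase
      · have hrp : r = p := (Nat.prime_dvd_prime_iff_eq hr hpprime).mp (hr.dvd_of_dvd_pow hcase)
        exact (Nat.Prime.not_coprime_iff_dvd.mpr ⟨p, hpprime, hpa, hrp ▸ hrb⟩) hcop
      · have hlt1 : p < r := hlt p r hpprime hr hpa hrb
        have hp2 := hpprime.two_le
        have hle1 : r ≤ p - 1 := Nat.le_of_dvd (by omega) hcase
        omega
    have h1 : orderOf (MulAut.conjNormal (H := Q) x) ∣ b :=
      dvd_trans (orderOf_map_dvd (MulAut.conjNormal (H := Q)) x) hxb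
    have h2 : orderOf (MulAut.conjNormal (H := Q) x) ∣ Nat.totient q := by
      have := orderOf_dvd_natCard (MulAut.conjNormal (H := Q) x)
      rwa [IsCyclic.card_mulAut] at this
    have h3 : orderOf (MulAut.conjNormal (H := Q) x) ∣ 1 := by
      have := Nat.dvd_gcd h2 h1
      rwa [Nat.Coprime.gcd_eq_one hcoptot] at this
    have h4 : MulAut.conjNormal (H := Q) x = 1 := by
      rw [← orderOf_eq_one_iff]
      exact Nat.dvd_one.mp h3
    have h5 : MulAut.conjNormal (H := Q) x ⟨y, hy⟩ = ⟨y, hy⟩ := by rw [h4]; rfl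
    have h6 := MulAut.conjNormal_apply (H := Q) x ⟨y, hy⟩
    rw [h5] at h6
    exact h6.symm
  -- the quotient and its Hall subgroup S
  haveI hnil : Group.IsNilpotent (G ⧸ N) := aux_quot_nilpotent
  set S : Subgroup (G ⧸ N) :=
    { carrier := {z : G ⧸ N | Nat.Coprime (orderOf z) a}
      mul_mem' := fun hx hy => aux_nilpotent_coprime_mul a hx hy
      one_mem' := by rw [Set.mem_setOf_eq, orderOf_one]; exact Nat.coprime_one_left a
      inv_mem' := fun hx => by rw [Set.mem_setOf_eq, orderOf_inv]; exact hx } with hSdef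
  have hSmem : ∀ z : G ⧸ N, z ∈ S ↔ Nat.Coprime (orderOf z) a := fun z => Iff.rfl
  haveI hSnormal : S.Normal := by
    constructor
    intro x hx g
    rw [hSmem] at hx ⊢
    rw [aux_orderOf_conj]
    exact hx
  set K : Subgroup G := S.comap (QuotientGroup.mk' N) with hKdef
  haveI hKnormal : K.Normal := hSnormal.comap _
  have hCK : ∀ x : G, Nat.Coprime (orderOf x) a → x ∈ K := by
    intro x hx
    have hdd : orderOf (QuotientGroup.mk' N x) ∣ orderOf x := orderOf_map_dvd _ x
    exact Nat.Coprime.coprime_dvd_left hdd hx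
  have hBK : B ≤ K := by
    intro x hx
    exact hCK x (Nat.Coprime.coprime_dvd_left (Subgroup.orderOf_dvd_natCard B hx) hcop.symm)
  have hNK : N ≤ K := by
    intro x hx
    show QuotientGroup.mk' N x ∈ S
    have h0 : (QuotientGroup.mk' N) x = 1 := (QuotientGroup.eq_one_iff x).mpr hx
    rw [hSmem, h0, orderOf_one]
    exact Nat.coprime_one_left a
  have hQK : Q ≤ K := le_trans hQN hNK
  set s := Nat.card S with hs
  have hcardK : Nat.card K = s * n := by
    set φ : K →* G ⧸ N := (QuotientGroup.mk' N).comp K.subtype with hφ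
    have hker : φ.ker = N.subgroupOf K := by
      ext x
      simp only [MonoidHom.mem_ker, hφ, MonoidHom.comp_apply, Subgroup.coe_subtype,
        Subgroup.mem_subgroupOf]
      exact QuotientGroup.eq_one_iff _
    have hrange : φ.range = S := by
      ext z
      constructor
      · rintro ⟨k, rfl⟩
        exact k.2
      · intro hz
        obtain ⟨g, rfl⟩ := QuotientGroup.mk'_surjective N z
        exact ⟨⟨g, hz⟩, rfl⟩
    have e1 : Nat.card (K ⧸ φ.ker) = Nat.card φ.range :=
      Nat.card_congr (QuotientGroup.quotientKerEquivRange φ).toEquiv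
    have e2 : Nat.card φ.ker = n := by
      rw [hker]
      exact Nat.card_congr (Subgroup.subgroupOfEquivOfLe hNK).toEquiv
    calc Nat.card K = Nat.card (K ⧸ φ.ker) * Nat.card φ.ker :=
          Subgroup.card_eq_card_quotient_mul_card_subgroup _
      _ = s * n := by rw [e1, e2, hrange]
  have hsa : Nat.Coprime s a := by
    by_contra h
    obtain ⟨p, hp, hps, hpa⟩ := Nat.Prime.not_coprime_iff_dvd.mp h
    haveI : Fact p.Prime := ⟨hp⟩
    obtain ⟨z, hz⟩ := exists_prime_orderOf_dvd_card' (G := S) p hps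
    have hz2 : Nat.Coprime (orderOf (z : G ⧸ N)) a := z.2
    rw [Subgroup.orderOf_coe, hz] at hz2
    exact (hp.coprime_iff_not_dvd.mp hz2) hpa
  have hqn : q ∣ n := Subgroup.card_dvd_of_le hQN
  set v := n / q with hv
  have hnv : n = q * v := (Nat.mul_div_cancel' hqn).symm
  have hvb : ∀ p : ℕ, p.Prime → p ∣ v → p ∣ b := by
    intro p hp hpv
    by_contra hpb
    obtain ⟨g₀, hg₀⟩ := IsCyclic.exists_generator (α := N)
    have hordg : orderOf g₀ = n := orderOf_eq_card_of_forall_mem_zpowers hg₀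
    have hqpn : q * p ∣ n := by rw [hnv]; exact mul_dvd_mul_left q hpv
    have hn0 : n ≠ 0 := Nat.card_pos.ne'
    set h₁ := g₀ ^ (n / (q * p)) with hh
    have hordh : orderOf h₁ = q * p := by
      rw [hh, orderOf_pow, hordg, Nat.gcd_eq_right (Nat.div_dvd_of_dvd hqpn),
        Nat.div_div_self hqpn hn0]
    have hhQ : (h₁ : G) ∈ Q := by
      rw [hQmem]
      refine ⟨h₁.2, ?_⟩
      rw [Subgroup.orderOf_coe, hordh]
      exact Nat.Coprime.mul hqb (hp.coprime_iff_not_dvd.mpr hpb)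
    have hdq : q * p ∣ q := by
      have := Subgroup.orderOf_dvd_natCard Q hhQ
      rwa [Subgroup.orderOf_coe, hordh] at this
    have hq0 : 0 < q := Nat.card_pos
    have hle := Nat.le_of_dvd hq0 hdq
    nlinarith [hp.two_le]
  have hva : Nat.Coprime v a := by
    by_contra h
    obtain ⟨p, hp, hpv, hpa⟩ := Nat.Prime.not_coprime_iff_dvd.mp h
    exact (Nat.Prime.not_coprime_iff_dvd.mpr ⟨p, hp, hpa, hvb p hp hpv⟩) hcop
  have hKdvd : Nat.card K ∣ q * b := by
    have h1 : s * n ∣ a * b := by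
      rw [← hcardK, ← hG]
      exact Subgroup.card_subgroup_dvd_card K
    have h2 : s * v ∣ a * b := by
      refine dvd_trans ?_ h1
      rw [hnv]
      exact ⟨q, by ring⟩
    have h3 : s * v ∣ b := (Nat.Coprime.dvd_mul_left (Nat.Coprime.mul hsa hva)).mp h2
    rw [hcardK, hnv]
    calc s * (q * v) = q * (s * v) := by ring
      _ ∣ q * b := mul_dvd_mul_left q h3
  have hQBbot : Q ⊓ B = ⊥ := Subgroup.inf_eq_bot_of_coprime (hb ▸ hqb)
  have hmulset : (↑(Q ⊔ B) : Set G) = (↑Q : Set G) * (↑B : Set G) := Subgroup.normal_mul Q B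
  have hcardQB : Nat.card (Q ⊔ B : Subgroup G) = q * b := by
    let e : Q × B → (Q ⊔ B : Subgroup G) := fun p =>
      ⟨(p.1 : G) * p.2, Subgroup.mul_mem _ (Subgroup.mem_sup_left p.1.2)
        (Subgroup.mem_sup_right p.2.2)⟩
    have hbij : Function.Bijective e := by
      constructor
      · rintro ⟨x1, y1⟩ ⟨x2, y2⟩ hxy
        have h1 : (x1 : G) * y1 = x2 * y2 := congrArg Subtype.val hxy
        have h3 : (x1 : G) = (x2 : G) * ((y2 : G) * (y1 : G)⁻¹) := by
          rw [← mul_assoc, ← h1, mul_assoc, mul_inv_cancel, mul_one]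
        have h2 : (x2 : G)⁻¹ * (x1 : G) = (y2 : G) * (y1 : G)⁻¹ := by
          rw [h3, ← mul_assoc, inv_mul_cancel, one_mul]
        have hmem1 : (x2 : G)⁻¹ * x1 ∈ Q := Subgroup.mul_mem _ (Subgroup.inv_mem _ x2.2) x1.2
        have hmem2 : (x2 : G)⁻¹ * x1 ∈ B := h2 ▸ Subgroup.mul_mem _ y2.2 (Subgroup.inv_mem _ y1.2)
        have hbot : (x2 : G)⁻¹ * x1 ∈ Q ⊓ B := ⟨hmem1, hmem2⟩
        rw [hQBbot, Subgroup.mem_bot] at hbot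
        have hx12 : (x1 : G) = x2 := (inv_mul_eq_one.mp hbot).symm
        have hy12 : (y1 : G) = y2 := by
          apply mul_left_cancel (a := (x1 : G))
          rw [h1, hx12]
        exact Prod.ext (Subtype.ext hx12) (Subtype.ext hy12)
      · rintro ⟨z, hz⟩
        have hz' : z ∈ (↑Q * ↑B : Set G) := hmulset ▸ hz
        obtain ⟨y, hy, w, hw, hyw⟩ := hz'
        exact ⟨(⟨y, hy⟩, ⟨w, hw⟩), Subtype.ext hyw⟩
    calc Nat.card (Q ⊔ B : Subgroup G) = Nat.card (Q × B) :=
          (Nat.card_congr (Equiv.ofBijective e hbij)).symm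
      _ = q * b := Nat.card_prod _ _
  have hQBle : Q ⊔ B ≤ K := sup_le hQK hBK
  have hKQB : K = Q ⊔ B := by
    have h1 : Nat.card (Q ⊔ B : Subgroup G) ∣ Nat.card K := Subgroup.card_dvd_of_le hQBle
    have h2 : Nat.card K = Nat.card (Q ⊔ B : Subgroup G) := by
      rw [hcardQB]
      exact Nat.dvd_antisymm hKdvd (hcardQB ▸ h1)
    exact (Subgroup.eq_of_le_of_card_ge hQBle h2.le).symm
  constructor
  intro b₀ hb₀ g
  have hordb : Nat.Coprime (orderOf b₀) a :=
    Nat.Coprime.coprime_dvd_left (Subgroup.orderOf_dvd_natCard B hb₀) hcop.symm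
  have hxcop : Nat.Coprime (orderOf (g * b₀ * g⁻¹)) a := by
    rw [aux_orderOf_conj]; exact hordb
  have hxK : g * b₀ * g⁻¹ ∈ K := hCK _ hxcop
  rw [hKQB] at hxK
  have hxmul : g * b₀ * g⁻¹ ∈ (↑Q * ↑B : Set G) := hmulset ▸ hxK
  obtain ⟨y, hy, z, hz, hyz⟩ := hxmul
  have hzcop : Nat.Coprime (orderOf z) a :=
    Nat.Coprime.coprime_dvd_left (Subgroup.orderOf_dvd_natCard B hz) hcop.symm
  have h7 : z * y * z⁻¹ = y := hcentral z hzcop y hy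
  have hcomm : Commute y z := by
    rw [commute_iff_eq]
    calc y * z = (z * y * z⁻¹) * z := by rw [h7]
      _ = z * y := by group
  have hoy : orderOf y ∣ a := dvd_trans (Subgroup.orderOf_dvd_natCard Q hy) hqa
  have hoz : orderOf z ∣ b := Subgroup.orderOf_dvd_natCard B hz
  have hco : Nat.Coprime (orderOf y) (orderOf z) :=
    Nat.Coprime.coprime_dvd_right hoz (Nat.Coprime.coprime_dvd_left hoy hcop)
  have hmul2 : orderOf (y * z) = orderOf y * orderOf z :=
    hcomm.orderOf_mul_eq_mul_orderOf_of_coprime hco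
  have h5 : orderOf y ∣ orderOf (g * b₀ * g⁻¹) := by
    rw [← hyz, hmul2]
    exact dvd_mul_right _ _
  have h6 : orderOf y ∣ 1 := by
    have := Nat.dvd_gcd h5 hoy
    rwa [Nat.Coprime.gcd_eq_one hxcop] at this
  have hy1 : y = 1 := by
    rw [← orderOf_eq_one_iff]
    exact Nat.dvd_one.mp h6
  rw [← hyz, hy1]
  simpa using hz
end

section
/- Let A and G be finite groups of coprime orders with A acting on G by automorphisms. Then [[G,A],A] = [G,A]. -/
/-- The subgroup `[H,A]` generated by `{h⁻¹ · (a • h) : h ∈ H, a ∈ A}`, for an action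
of `A` on `G` by automorphisms and a subgroup `H` of `G`. -/
def commSubgroup {A G : Type*} [Group A] [Group G] (φ : A →* MulAut G) (H : Subgroup G) :
    Subgroup G :=
  Subgroup.closure {x : G | ∃ h ∈ H, ∃ a : A, x = h⁻¹ * φ a h}

/-- Coprime action: `[[G,A],A] = [G,A]`. -/
theorem stmt_5 {A G : Type*} [Group A] [Group G] [Finite A] [Finite G]
    (hcop : Nat.Coprime (Nat.card A) (Nat.card G)) (φ : A →* MulAut G) :
    commSubgroup φ (commSubgroup φ (⊤ : Subgroup G)) = commSubgroup φ (⊤ : Subgroup G) := by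
  set K := commSubgroup φ (⊤ : Subgroup G) with hK
  have hgenK : ∀ (g : G) (a : A), g⁻¹ * φ a g ∈ K :=
    fun g a => Subgroup.subset_closure ⟨g, trivial, a, rfl⟩
  set N := commSubgroup φ K with hN
  have hgenN : ∀ g : G, g ∈ K → ∀ a : A, g⁻¹ * φ a g ∈ N :=
    fun g hg a => Subgroup.subset_closure ⟨g, hg, a, rfl⟩
  apply le_antisymm
  · rw [hN, commSubgroup, Subgroup.closure_le]
    rintro x ⟨h, hh, a, rfl⟩
    have : φ a h = h * (h⁻¹ * φ a h) := by group
    exact K.mul_mem (K.inv_mem hh) (by rw [this]; exact K.mul_mem hh (hgenK h a))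
  · rw [hK, commSubgroup, Subgroup.closure_le]
    rintro x ⟨g, -, a, rfl⟩
    set n := g⁻¹ * φ a g with hn
    show n ∈ N
    have key : ∀ k : ℕ, ∃ d ∈ N, g⁻¹ * φ (a ^ k) g = n ^ k * d := by
      intro k
      induction k with
      | zero => exact ⟨1, N.one_mem, by simp⟩
      | succ k ih =>
        obtain ⟨d, hd, hc⟩ := ih
        set c := g⁻¹ * φ (a ^ k) g with hcdef
        have hcK : c ∈ K := hgenK g (a ^ k)
        have he : c⁻¹ * φ a c ∈ N := hgenN c hcK a
        refine ⟨d * (c⁻¹ * φ a c), N.mul_mem hd he, ?_⟩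
        have h1 : g⁻¹ * φ (a ^ (k + 1)) g = n * φ a c := by
          rw [pow_succ', map_mul, MulAut.mul_apply, hcdef, hn]
          simp [map_mul, mul_assoc]
        have h2 : φ a c = c * (c⁻¹ * φ a c) := by group
        rw [h1, h2, hc]
        rw [pow_succ']
        group
    obtain ⟨d, hd, hcm⟩ := key (orderOf a)
    have hone : g⁻¹ * φ (a ^ orderOf a) g = 1 := by
      rw [pow_orderOf_eq_one, map_one]; simp
    have hm : n ^ orderOf a ∈ N := by
      have : n ^ orderOf a = d⁻¹ := by
        have := hcm.symm.trans hone
        -- n ^ m * d = 1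
        exact eq_inv_of_mul_eq_one_left (by rwa [hcm] at hone)
      rw [this]; exact N.inv_mem hd
    have hcop' : Nat.Coprime (orderOf a) (orderOf n) :=
      Nat.Coprime.coprime_dvd_right (orderOf_dvd_natCard n)
        (Nat.Coprime.coprime_dvd_left (orderOf_dvd_natCard a) hcop)
    obtain ⟨u, v, huv⟩ := Nat.isCoprime_iff_coprime.mpr hcop'
    have : n = (n ^ (orderOf a : ℤ)) ^ u * (n ^ (orderOf n : ℤ)) ^ v := by
      rw [← zpow_mul, ← zpow_mul, ← zpow_add]
      rw [mul_comm u, mul_comm v] at huv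
      rw [huv, zpow_one]
    rw [this]
    refine N.mul_mem (N.zpow_mem ?_ u) (N.zpow_mem ?_ v)
    · rwa [zpow_natCast]
    · rw [zpow_natCast, pow_orderOf_eq_one]; exact N.one_mem
end

section
/- Let A = ⟨x,y⟩ be a finite abelian group generated by two elements acting on a finite abelian group B by automorphisms. Then every element of the subgroup [B,A] (generated by b⁻¹·(a•b) for b ∈ B, a ∈ A) is a commutator in the semidirect product B ⋊ A. -/
/-- If `A = ⟨x,y⟩` is a finite abelian 2-generator group acting on a finite abelian group
`B`, then every element of `[B,A]` is a commutator in the semidirect product `B ⋊ A`. -/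
theorem stmt_6 {A B : Type*} [CommGroup A] [Finite A] [CommGroup B] [Finite B]
    (x y : A) (hgen : Subgroup.closure ({x, y} : Set A) = ⊤)
    (φ : A →* MulAut B)
    (b : B) (hb : b ∈ Subgroup.closure {z : B | ∃ b' : B, ∃ a : A, z = b'⁻¹ * φ a b'}) :
    ∃ g h : B ⋊[φ] A, SemidirectProduct.inl b = g⁻¹ * h⁻¹ * g * h := by
  -- the subgroup of elements of the form b₁⁻¹ (x•b₁) c₁⁻¹ (y•c₁)
  set S : Subgroup B :=
  { carrier := {z | ∃ b1 c1 : B, z = b1⁻¹ * φ x b1 * (c1⁻¹ * φ y c1)}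
    one_mem' := ⟨1, 1, by simp⟩
    mul_mem' := by
      rintro _ _ ⟨b1, c1, rfl⟩ ⟨b2, c2, rfl⟩
      exact ⟨b1 * b2, c1 * c2, by
        simp only [map_mul, mul_inv_rev]
        simp [mul_comm, mul_left_comm, mul_assoc]⟩
    inv_mem' := by
      rintro _ ⟨b1, c1, rfl⟩
      exact ⟨b1⁻¹, c1⁻¹, by
        simp only [map_inv, mul_inv_rev, inv_inv]
        simp [mul_comm, mul_left_comm, mul_assoc]⟩ } with hS
  have hSmem : ∀ z ∈ S, ∃ b1 c1 : B, z = b1⁻¹ * φ x b1 * (c1⁻¹ * φ y c1) := fun z h => h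
  -- the subgroup of a ∈ A such that all z⁻¹ (a•z) lie in S
  set T : Subgroup A :=
  { carrier := {a | ∀ z : B, z⁻¹ * φ a z ∈ S}
    one_mem' := fun z => by simpa using S.one_mem
    mul_mem' := by
      intro a c ha hc z
      have : z⁻¹ * φ (a * c) z = (z⁻¹ * φ c z) * ((φ c z)⁻¹ * φ a (φ c z)) := by
        simp [map_mul, mul_assoc]
      rw [this]
      exact S.mul_mem (hc z) (ha (φ c z))
    inv_mem' := by
      intro a ha z
      have : z⁻¹ * φ a⁻¹ z = ((φ a⁻¹ z)⁻¹ * φ a (φ a⁻¹ z))⁻¹ := by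
        simp [mul_comm]
      rw [this]
      exact S.inv_mem (ha (φ a⁻¹ z)) } with hT
  have hTtop : ∀ a : A, a ∈ T := by
    have : Subgroup.closure ({x, y} : Set A) ≤ T := by
      rw [Subgroup.closure_le]
      rintro a (rfl | rfl)
      · intro z; exact ⟨z, 1, by simp⟩
      · intro z; exact ⟨1, z, by simp⟩
    intro a; exact this (hgen ▸ Subgroup.mem_top a)
  have hbS : b ∈ S := by
    have : Subgroup.closure {z : B | ∃ b' : B, ∃ a : A, z = b'⁻¹ * φ a b'} ≤ S := by
      rw [Subgroup.closure_le]
      rintro z ⟨b', a, rfl⟩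
      exact hTtop a b'
    exact this hb
  obtain ⟨b1, c1, hrep⟩ := hSmem b hbS
  -- now exhibit the commutator
  refine ⟨SemidirectProduct.inl ((φ (x * y) c1)⁻¹) * SemidirectProduct.inr x,
    SemidirectProduct.inl (φ (x * y) b1) * SemidirectProduct.inr y, ?_⟩
  ext
  · simp only [SemidirectProduct.mul_left, SemidirectProduct.inv_left,
      SemidirectProduct.mul_right, SemidirectProduct.inv_right,
      SemidirectProduct.left_inl, SemidirectProduct.right_inl,
      SemidirectProduct.left_inr, SemidirectProduct.right_inr,
      map_one, map_mul, map_inv, mul_one, one_mul, inv_one]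
    rw [hrep]
    have hinv : ∀ a : A, (φ a)⁻¹ = φ a⁻¹ := fun a => (map_inv φ a).symm
    have hcomp : ∀ (a c : A) (z : B), φ a (φ c z) = φ (a * c) z := fun a c z => by
      rw [map_mul]; rfl
    simp only [MulAut.mul_apply, MulAut.one_apply, hinv, hcomp, inv_inv]
    have e1 : x⁻¹ * (x * y) = y := by group
    have e2 : x⁻¹ * (y⁻¹ * (x * y)) = 1 := by rw [mul_comm x y]; group
    have e3 : x⁻¹ * (y⁻¹ * (x * (x * y))) = x := by
      simp [mul_comm, mul_left_comm, mul_assoc]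
    rw [e1, e2, e3]
    simp only [map_one, MulAut.one_apply]
    simp [mul_comm, mul_left_comm, mul_assoc]
  · simp only [SemidirectProduct.mul_right, SemidirectProduct.inv_right,
      SemidirectProduct.right_inl, SemidirectProduct.right_inr,
      SemidirectProduct.left_inl, one_mul, mul_one]
    group
    simp [mul_comm]
end

section
/- Let G be a finite group, A and B subgroups with G = AB and coprime orders. If p divides the order of A and p is less than every prime dividing the order of B, and N is a normal subgroup of G of order p, then [N,B] = 1. -/
theorem stmt_14 {G : Type*} [Group G] [Finite G] (N : Subgroup G) [N.Normal]
    (p : ℕ) (hp : p.Prime) (hN : Nat.card N = p) (B : Subgroup G)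
    (hB : ∀ q : ℕ, q.Prime → q ∣ Nat.card B → p < q) :
    ∀ b ∈ B, ∀ n ∈ N, b * n = n * b := by
  intro b hb n hn
  haveI := Fact.mk hp
  have hcyc : IsCyclic N := isCyclic_of_prime_card hN
  have hcard : Nat.card (MulAut N) = p - 1 := by
    rw [hcyc.card_mulAut, hN, Nat.totient_prime hp]
  set φ := MulAut.conjNormal (H := N) b with hφ
  have h1 : orderOf φ ∣ p - 1 := hcard ▸ orderOf_dvd_natCard φ
  have h2 : orderOf φ ∣ Nat.card B := by
    have : orderOf b ∣ Nat.card B := by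
      have := orderOf_dvd_natCard (⟨b, hb⟩ : B)
      simpa [Subgroup.orderOf_mk] using this
    exact (orderOf_map_dvd MulAut.conjNormal b).trans this
  have hφ1 : φ = 1 := by
    have : orderOf φ = 1 := by
      by_contra h
      obtain ⟨q, hq, hqd⟩ := Nat.exists_prime_and_dvd h
      have hq1 : q ∣ p - 1 := hqd.trans h1
      have hq2 : q ∣ Nat.card B := hqd.trans h2
      have := hB q hq hq2
      have hp2 := hp.two_le
      have hle : q ≤ p - 1 := Nat.le_of_dvd (by omega) hq1
      omega
    exact orderOf_eq_one_iff.mp this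
  have := MulAut.conjNormal_apply (H := N) b ⟨n, hn⟩
  rw [← hφ, hφ1] at this
  simp only [MulAut.one_apply] at this
  have h3 : b * n * b⁻¹ = n := this.symm
  rw [mul_inv_eq_iff_eq_mul] at h3
  exact h3
end
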